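/- In the extragradient setting with γ ∈ (0, 1/L], define ξᵏ⁺¹ = (1/γ)(zᵏ - zᵏ⁺¹) - F(z̄ᵏ) (so that ξᵏ⁺¹ ∈ ∂g(zᵏ⁺¹)). Then ‖F(zᵏ⁺¹) + ξᵏ⁺¹‖² ≤ Vₖ for every k, where Vₖ = (2/γ)⟨zᵏ - zᵏ⁺¹, F(zᵏ) - F(z̄ᵏ)⟩ + (1/γ²)‖zᵏ⁺¹ - z̄ᵏ‖² + (1/γ²)‖zᵏ - zᵏ⁺¹‖². -/
import Mathlib


open scoped RealInnerProductSpace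

/-- `g` is proper: finite somewhere and never `⊥`. -/
def IsProperEF {H : Type*} (g : H → EReal) : Prop :=
  (∃ x, g x ≠ ⊤) ∧ ∀ x, g x ≠ ⊥

/-- `g` is convex (extended-real-valued). -/
def IsConvexEF {H : Type*} [NormedAddCommGroup H] [InnerProductSpace ℝ H]
    (g : H → EReal) : Prop :=
  ∀ x y : H, ∀ a b : ℝ, 0 ≤ a → 0 ≤ b → a + b = 1 →
    g (a • x + b • y) ≤ (a : EReal) * g x + (b : EReal) * g y

/-- `ξ` is a subgradient of `g` at `z`, i.e. `ξ ∈ ∂g(z)`. -/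
def InSubdiff {H : Type*} [NormedAddCommGroup H] [InnerProductSpace ℝ H]
    (g : H → EReal) (z ξ : H) : Prop :=
  ∀ y : H, g z + ((⟪ξ, y - z⟫ : ℝ) : EReal) ≤ g y

/-- `p = prox_{γ g}(x)`, i.e. `p` minimizes `g(·) + (1/(2γ))‖x - ·‖²`. -/
def IsProx {H : Type*} [NormedAddCommGroup H] [InnerProductSpace ℝ H]
    (g : H → EReal) (γ : ℝ) (x p : H) : Prop :=
  ∀ y : H, g p + ((1 / (2 * γ) * ‖x - p‖ ^ 2 : ℝ) : EReal) ≤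
    g y + ((1 / (2 * γ) * ‖x - y‖ ^ 2 : ℝ) : EReal)

/-- The Lyapunov function `V`. -/
noncomputable def lyapV {H : Type*} [NormedAddCommGroup H] [InnerProductSpace ℝ H]
    (F : H → H) (γ : ℝ) (z zb zp : H) : ℝ :=
  (2 / γ) * ⟪z - zp, F z - F zb⟫ + (1 / γ ^ 2) * ‖zp - zb‖ ^ 2 + (1 / γ ^ 2) * ‖z - zp‖ ^ 2

theorem stmt8 {H : Type*} [NormedAddCommGroup H] [InnerProductSpace ℝ H] [CompleteSpace H]
    (F : H → H) (L γ : ℝ) (hL : 0 < L)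
    (hmono : ∀ x y : H, 0 ≤ ⟪F x - F y, x - y⟫)
    (hlip : ∀ x y : H, ‖F x - F y‖ ≤ L * ‖x - y‖)
    (g : H → EReal) (hproper : IsProperEF g) (hconv : IsConvexEF g)
    (hlsc : LowerSemicontinuous g)
    (hγ0 : 0 < γ) (hγ1 : γ * L ≤ 1)
    (z zb : ℕ → H)
    (hzb : ∀ k, IsProx g γ (z k - γ • F (z k)) (zb k))
    (hz : ∀ k, IsProx g γ (z k - γ • F (zb k)) (z (k + 1)))
    (ξ : ℕ → H)
    (hξ : ∀ k, ξ (k + 1) = γ⁻¹ • (z k - z (k + 1)) - F (zb k)) :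
    ∀ k : ℕ,
      ‖F (z (k + 1)) + ξ (k + 1)‖ ^ 2 ≤ lyapV F γ (z k) (zb k) (z (k + 1)) := by
  intro k
  rw [hξ]
  have hv : F (z (k+1)) + (γ⁻¹ • (z k - z (k+1)) - F (zb k))
      = (F (z (k+1)) - F (zb k)) + γ⁻¹ • (z k - z (k+1)) := by abel
  rw [hv, norm_add_sq_real, norm_smul, real_inner_smul_right]
  unfold lyapV
  have hsplit : ⟪z k - z (k+1), F (z k) - F (zb k)⟫
      = ⟪z k - z (k+1), F (z k) - F (z (k+1))⟫
        + ⟪z k - z (k+1), F (z (k+1)) - F (zb k)⟫ := by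
    rw [← inner_add_right]; congr 1; abel
  have hm := hmono (z k) (z (k+1))
  rw [real_inner_comm] at hm
  have hcomm : ⟪F (z (k+1)) - F (zb k), z k - z (k+1)⟫
      = ⟪z k - z (k+1), F (z (k+1)) - F (zb k)⟫ := real_inner_comm _ _
  have hlipsq : ‖F (z (k+1)) - F (zb k)‖ ^ 2 ≤ 1 / γ ^ 2 * ‖z (k+1) - zb k‖ ^ 2 := by
    have h1 := hlip (z (k+1)) (zb k)
    have h2 : 0 ≤ ‖F (z (k+1)) - F (zb k)‖ := norm_nonneg _
    have h3 : 0 ≤ ‖z (k+1) - zb k‖ := norm_nonneg _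
    have hLγ : L ≤ 1 / γ := by
      rw [le_div_iff₀ hγ0]; linarith [mul_comm γ L ▸ hγ1]
    have : ‖F (z (k+1)) - F (zb k)‖ ^ 2 ≤ (L * ‖z (k+1) - zb k‖) ^ 2 := by
      nlinarith
    calc ‖F (z (k+1)) - F (zb k)‖ ^ 2 ≤ (L * ‖z (k+1) - zb k‖) ^ 2 := this
      _ ≤ (1 / γ * ‖z (k+1) - zb k‖) ^ 2 :=
          pow_le_pow_left₀ (mul_nonneg hL.le h3)
            (mul_le_mul_of_nonneg_right hLγ h3) 2
      _ = 1 / γ ^ 2 * ‖z (k+1) - zb k‖ ^ 2 := by ring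
  have habs : ‖(γ⁻¹ : ℝ)‖ = γ⁻¹ := by
    rw [Real.norm_eq_abs, abs_of_pos (inv_pos.mpr hγ0)]
  rw [habs, hcomm, hsplit, mul_pow]
  have hγ2 : 0 < γ ^ 2 := by positivity
  have hγi : γ⁻¹ = 1 / γ := by field_simp
  rw [hγi]
  rw [show (2 : ℝ) / γ = 2 * (1 / γ) from by ring,
    show (1:ℝ) / γ ^ 2 = (1 / γ) ^ 2 from by ring]
  rw [show (1:ℝ) / γ ^ 2 = (1 / γ) ^ 2 from by ring] at hlipsq
  nlinarith [mul_nonneg (le_of_lt (by positivity : (0:ℝ) < 1/γ)) hm]
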